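/- The First Lower Bound and its real-line form: for measure networks X, Y and p ∈ [1,∞], inf over μ ∈ C(μ_X,μ_Y) of ‖ecc^out_{p,X,Y}‖_{L^p(μ)} ≥ inf over μ ∈ C(μ_X,μ_Y) of ‖ecc^out_{p,X} ∘ π_X − ecc^out_{p,Y} ∘ π_Y‖_{L^p(μ)}, and the latter equals W_p((ecc^out_{p,X})_*μ_X, (ecc^out_{p,Y})_*μ_Y). -/

import Mathlib

open MeasureTheory ENNReal

/-- The set of couplings between two measures: probability-type measures on the product
with the prescribed marginals. -/
def Coupling {X Y : Type*} [MeasurableSpace X] [MeasurableSpace Y]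
    (μX : Measure X) (μY : Measure Y) : Set (Measure (X × Y)) :=
  {μ | μ.fst = μX ∧ μ.snd = μY}

/-- The `p`-distortion of a coupling `μ` between two measure networks, namely
`‖ω_X - ω_Y‖_{L^p(μ ⊗ μ)}` (for `p = ∞` this is the essential supremum). -/
noncomputable def dis {X Y : Type*} [MeasurableSpace X] [MeasurableSpace Y]
    (ωX : X × X → ℝ) (ωY : Y × Y → ℝ) (p : ℝ≥0∞) (μ : Measure (X × Y)) : ℝ≥0∞ :=
  eLpNorm (fun q : (X × Y) × (X × Y) => ωX (q.1.1, q.2.1) - ωY (q.1.2, q.2.2)) p (μ.prod μ)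

/-- The network Gromov–Wasserstein distance: half the infimal `p`-distortion over couplings. -/
noncomputable def dN {X Y : Type*} [MeasurableSpace X] [MeasurableSpace Y]
    (ωX : X × X → ℝ) (ωY : Y × Y → ℝ) (p : ℝ≥0∞) (μX : Measure X) (μY : Measure Y) : ℝ≥0∞ :=
  (1 / 2) * ⨅ μ ∈ Coupling μX μY, dis ωX ωY p μ

/-- The `p`-th Wasserstein distance between two Borel measures on `ℝ`, as an infimum of
`L^p` transport costs over couplings. -/
noncomputable def Wp (p : ℝ≥0∞) (α β : Measure ℝ) : ℝ≥0∞ :=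
  ⨅ θ ∈ Coupling α β, eLpNorm (fun q : ℝ × ℝ => q.1 - q.2) p θ

/-- The `L^p` norm (with respect to `μ`) of an `ℝ≥0∞`-valued function, covering `p = ∞`
via the essential supremum. -/
noncomputable def lpNormENN {α : Type*} [MeasurableSpace α] (p : ℝ≥0∞)
    (f : α → ℝ≥0∞) (μ : Measure α) : ℝ≥0∞ :=
  if p = ∞ then essSup f μ else (∫⁻ a, f a ^ p.toReal ∂μ) ^ (1 / p.toReal)

/-- The outgoing joint eccentricity function
`ecc^out_{p,X,Y}(s,t) = inf over couplings ν of ‖ω_X(s,·) − ω_Y(t,·)‖_{L^p(ν)}`. -/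
noncomputable def eccOutJoint {X Y : Type*} [MeasurableSpace X] [MeasurableSpace Y]
    (p : ℝ≥0∞) (ωX : X × X → ℝ) (ωY : Y × Y → ℝ) (μX : Measure X) (μY : Measure Y)
    (s : X) (t : Y) : ℝ≥0∞ :=
  ⨅ ν ∈ Coupling μX μY, eLpNorm (fun q : X × Y => ωX (s, q.1) - ωY (t, q.2)) p ν

/-- The outgoing eccentricity function `ecc^out_{p,X}(s) = ‖ω_X(s,·)‖_{L^p(μ_X)}`
(as a real number; it is finite since the weight function is bounded). -/
noncomputable def eccOut {X : Type*} [MeasurableSpace X]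
    (p : ℝ≥0∞) (ωX : X × X → ℝ) (μX : Measure X) (s : X) : ℝ :=
  (eLpNorm (fun x' => ωX (s, x')) p μX).toReal

section AuxLemmas

open ProbabilityTheory

lemma eLpNorm_eq_lpNormENN {α : Type*} [MeasurableSpace α] {p : ℝ≥0∞} (hp : p ≠ 0)
    (f : α → ℝ) (μ : Measure α) :
    eLpNorm f p μ = lpNormENN p (fun a => (‖f a‖₊ : ℝ≥0∞)) μ := by
  by_cases htop : p = ∞
  · simp [htop, lpNormENN, eLpNorm_exponent_top, eLpNormEssSup]; rfl
  · rw [eLpNorm_eq_lintegral_rpow_enorm_toReal hp htop, lpNormENN, if_neg htop]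
    rfl

lemma lpNormENN_mono {α : Type*} [MeasurableSpace α] (p : ℝ≥0∞)
    {f g : α → ℝ≥0∞} (μ : Measure α) (h : ∀ a, f a ≤ g a) :
    lpNormENN p f μ ≤ lpNormENN p g μ := by
  unfold lpNormENN
  split_ifs
  · exact essSup_mono_ae (Filter.Eventually.of_forall h)
  · exact ENNReal.rpow_le_rpow
      (lintegral_mono fun a => ENNReal.rpow_le_rpow (h a) ENNReal.toReal_nonneg)
      (by positivity)

lemma isProbCoupling {X Y : Type*} [MeasurableSpace X] [MeasurableSpace Y]
    {μX : Measure X} [IsProbabilityMeasure μX] {μ : Measure (X × Y)} (h : μ.fst = μX) :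
    IsProbabilityMeasure μ := by
  constructor
  have := congrArg (fun ν : Measure X => ν Set.univ) h
  simpa [Measure.fst_apply MeasurableSet.univ] using this

lemma essSup_sInf_rat {α : Type*} [MeasurableSpace α] (μ : Measure α) (f : α → ℝ≥0∞) :
    essSup f μ = ⨅ q : ℚ, if μ {x | (Real.toNNReal q : ℝ≥0∞) < f x} = 0
      then (Real.toNNReal q : ℝ≥0∞) else ∞ := by
  rw [essSup_eq_sInf]
  apply le_antisymm
  · refine le_iInf fun q => ?_
    split_ifs with h
    · exact sInf_le h
    · exact le_top
  · by_contra hcon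
    push_neg at hcon
    obtain ⟨c, hc, hlt⟩ := sInf_lt_iff.mp hcon
    obtain ⟨q, _, hq1, hq2⟩ := ENNReal.lt_iff_exists_rat_btwn.mp hlt
    have hmem : μ {x | (Real.toNNReal q : ℝ≥0∞) < f x} = 0 := by
      refine measure_mono_null ?_ hc
      intro x hx
      exact lt_of_le_of_lt hq1.le hx
    have : (⨅ q : ℚ, if μ {x | (Real.toNNReal q : ℝ≥0∞) < f x} = 0
        then (Real.toNNReal q : ℝ≥0∞) else ∞) ≤ (Real.toNNReal q : ℝ≥0∞) := by
      refine iInf_le_of_le q ?_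
      rw [if_pos hmem]
    exact absurd (this.trans_lt hq2) (lt_irrefl _)

lemma measurable_essSup_prod {α β : Type*} [MeasurableSpace α] [MeasurableSpace β]
    (μ : Measure β) [SFinite μ] {f : α × β → ℝ≥0∞} (hf : Measurable f) :
    Measurable fun a => essSup (fun b => f (a, b)) μ := by
  simp_rw [essSup_sInf_rat]
  refine Measurable.iInf fun q => ?_
  have hset : MeasurableSet {p : α × β | (Real.toNNReal q : ℝ≥0∞) < f p} :=
    measurableSet_lt measurable_const hf
  have hmeas : Measurable fun a => μ (Prod.mk a ⁻¹' {p : α × β | (Real.toNNReal q : ℝ≥0∞) < f p}) :=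
    measurable_measure_prodMk_left hset
  have : ∀ a : α, {x | (Real.toNNReal q : ℝ≥0∞) < f (a, x)} =
      Prod.mk a ⁻¹' {p : α × β | (Real.toNNReal q : ℝ≥0∞) < f p} := fun a => rfl
  simp_rw [this]
  exact Measurable.ite (hmeas (measurableSet_singleton 0)) measurable_const measurable_const

lemma measurable_eccOut {X : Type*} [MeasurableSpace X]
    (p : ℝ≥0∞) (ωX : X × X → ℝ) (hωX : Measurable ωX) (μX : Measure X) [SFinite μX] :
    Measurable (eccOut p ωX μX) := by
  unfold eccOut
  refine Measurable.ennreal_toReal ?_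
  by_cases hp0 : p = 0
  · simp [hp0, eLpNorm]
  by_cases htop : p = ∞
  · subst htop
    have h1 : (fun s => eLpNorm (fun x' => ωX (s, x')) ∞ μX)
        = fun s => essSup (fun x' => ((‖ωX (s, x')‖₊ : ℝ≥0∞))) μX := by
      funext s
      rw [eLpNorm_exponent_top, eLpNormEssSup]
      rfl
    rw [h1]
    exact measurable_essSup_prod μX (f := fun p => ((‖ωX p‖₊ : ℝ≥0∞)))
      (hωX.nnnorm.coe_nnreal_ennreal)
  · simp_rw [eLpNorm_eq_lintegral_rpow_enorm_toReal hp0 htop]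
    refine Measurable.pow ?_ measurable_const
    exact Measurable.lintegral_prod_right (hωX.nnnorm.coe_nnreal_ennreal.pow measurable_const)

/-- Disintegration along the graph map: a Markov kernel recovering `μX` from `μX.map e`,
a.e. supported on fibers. -/
lemma exists_fiber_kernel {X : Type*} [TopologicalSpace X] [PolishSpace X] [MeasurableSpace X]
    [BorelSpace X] (μX : Measure X) [IsProbabilityMeasure μX] {e : X → ℝ} (he : Measurable e) :
    ∃ κ : Kernel ℝ X, IsMarkovKernel κ ∧
      (∀ s : Set X, MeasurableSet s → ∫⁻ a, κ a s ∂(μX.map e) = μX s) ∧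
      (∀ᵐ a ∂(μX.map e), κ a {x | e x = a} = 1) := by
  have hne : Nonempty X := by
    by_contra h
    rw [not_nonempty_iff] at h
    have h1 := measure_univ (μ := μX)
    rw [Set.univ_eq_empty_iff.mpr h] at h1
    simp at h1
  set m : Measure (ℝ × X) := μX.map (fun x => (e x, x)) with hm
  have hgm : Measurable fun x => (e x, x) := he.prodMk measurable_id
  have : IsProbabilityMeasure m := Measure.isProbabilityMeasure_map hgm.aemeasurable
  have hfst : m.fst = μX.map e := Measure.fst_map_prodMk measurable_id
  refine ⟨m.condKernel, inferInstance, ?_, ?_⟩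
  · intro s hs
    have hdis : m.fst ⊗ₘ m.condKernel = m := m.disintegrate m.condKernel
    have h1 : m (Set.univ ×ˢ s) = μX s := by
      rw [hm, Measure.map_apply hgm (MeasurableSet.univ.prod hs)]
      congr 1
      ext x; simp
    rw [← hfst, ← h1]
    conv_rhs => rw [← hdis]
    rw [Measure.compProd_apply (MeasurableSet.univ.prod hs)]
    congr 1
    funext a
    congr 1
    ext x; simp
  · have hS : MeasurableSet {p : ℝ × X | e p.2 = p.1} :=
      measurableSet_eq_fun (he.comp measurable_snd) measurable_fst
    have hz : m {p : ℝ × X | e p.2 = p.1}ᶜ = 0 := by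
      rw [hm, Measure.map_apply hgm hS.compl]
      convert measure_empty (μ := μX)
      ext x; simp
    have hdis : m.fst ⊗ₘ m.condKernel = m := m.disintegrate m.condKernel
    rw [← hdis, Measure.compProd_apply hS.compl] at hz
    have hmeas : Measurable fun a => m.condKernel a (Prod.mk a ⁻¹' {p : ℝ × X | e p.2 = p.1}ᶜ) :=
      Kernel.measurable_kernel_prodMk_left hS.compl
    rw [lintegral_eq_zero_iff hmeas] at hz
    rw [← hfst]
    filter_upwards [hz] with a ha
    have hpre : Prod.mk a ⁻¹' {p : ℝ × X | e p.2 = p.1}ᶜ = {x | e x = a}ᶜ := by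
      ext x; simp [eq_comm]
    rw [hpre] at ha
    have hms : MeasurableSet {x | e x = a} := measurableSet_eq_fun he measurable_const
    exact (prob_compl_eq_zero_iff hms).mp ha

/-- Any coupling of the pushforward measures lifts to a coupling of the original measures. -/
lemma coupling_lift {X Y : Type*} [TopologicalSpace X] [PolishSpace X] [MeasurableSpace X]
    [BorelSpace X] [TopologicalSpace Y] [PolishSpace Y] [MeasurableSpace Y] [BorelSpace Y]
    (μX : Measure X) (μY : Measure Y) [IsProbabilityMeasure μX] [IsProbabilityMeasure μY]
    {eX : X → ℝ} {eY : Y → ℝ} (heX : Measurable eX) (heY : Measurable eY)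
    {θ : Measure (ℝ × ℝ)} (hθ : θ ∈ Coupling (μX.map eX) (μY.map eY)) :
    ∃ μ ∈ Coupling μX μY, μ.map (Prod.map eX eY) = θ := by
  obtain ⟨κX, hκXm, hκX1, hκX2⟩ := exists_fiber_kernel μX heX
  obtain ⟨κY, hκYm, hκY1, hκY2⟩ := exists_fiber_kernel μY heY
  have : IsProbabilityMeasure (μX.map eX) := Measure.isProbabilityMeasure_map heX.aemeasurable
  have : IsProbabilityMeasure θ := isProbCoupling hθ.1
  set K : Kernel (ℝ × ℝ) (X × Y) :=
    (κX.comap Prod.fst measurable_fst) ×ₖ (κY.comap Prod.snd measurable_snd) with hK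
  have hKm : Measurable (K : ℝ × ℝ → Measure (X × Y)) := K.measurable
  have hKap : ∀ ab : ℝ × ℝ, K ab = (κX ab.1).prod (κY ab.2) := by
    intro ab
    rw [hK, Kernel.prod_apply, Kernel.comap_apply, Kernel.comap_apply]
  set μ : Measure (X × Y) := θ.bind K with hμ
  have hmapmeas : Measurable (Prod.map eX eY) := heX.prodMap heY
  have hfst : μ.fst = μX := by
    ext s hs
    rw [Measure.fst_apply hs, hμ, Measure.bind_apply (measurable_fst hs) hKm.aemeasurable]
    have h1 : ∀ ab : ℝ × ℝ, K ab (Prod.fst ⁻¹' s) = κX ab.1 s := by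
      intro ab
      rw [hKap ab]
      have : Prod.fst ⁻¹' s = s ×ˢ (Set.univ : Set Y) := by ext q; simp
      rw [this, Measure.prod_prod, measure_univ, mul_one]
    simp_rw [h1]
    have h2 : ∫⁻ ab : ℝ × ℝ, κX ab.1 s ∂θ = ∫⁻ a, κX a s ∂θ.fst := by
      rw [Measure.fst, lintegral_map (κX.measurable_coe hs) measurable_fst]
    rw [h2, hθ.1, hκX1 s hs]
  have hsnd : μ.snd = μY := by
    ext s hs
    rw [Measure.snd_apply hs, hμ, Measure.bind_apply (measurable_snd hs) hKm.aemeasurable]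
    have h1 : ∀ ab : ℝ × ℝ, K ab (Prod.snd ⁻¹' s) = κY ab.2 s := by
      intro ab
      rw [hKap ab]
      have : Prod.snd ⁻¹' s = (Set.univ : Set X) ×ˢ s := by ext q; simp
      rw [this, Measure.prod_prod, measure_univ, one_mul]
    simp_rw [h1]
    have h2 : ∫⁻ ab : ℝ × ℝ, κY ab.2 s ∂θ = ∫⁻ b, κY b s ∂θ.snd := by
      rw [Measure.snd, lintegral_map (κY.measurable_coe hs) measurable_snd]
    rw [h2, hθ.2, hκY1 s hs]
  refine ⟨μ, ⟨hfst, hsnd⟩, ?_⟩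
  have haeX : ∀ᵐ ab : ℝ × ℝ ∂θ, κX ab.1 {x | eX x = ab.1} = 1 := by
    have hSm : MeasurableSet {p : ℝ × X | eX p.2 = p.1} :=
      measurableSet_eq_fun (heX.comp measurable_snd) measurable_fst
    have hmeas : Measurable fun a : ℝ => κX a {x | eX x = a} := by
      have := Kernel.measurable_kernel_prodMk_left (κ := κX) hSm
      convert this using 2 with a
      rfl
    have h := hκX2
    rw [← hθ.1] at h
    have : ∀ᵐ a ∂(θ.map Prod.fst), κX a {x | eX x = a} = 1 := h
    exact (ae_map_iff measurable_fst.aemeasurable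
      (p := fun a => κX a {x | eX x = a} = 1) (hmeas (measurableSet_singleton 1))).mp this
  have haeY : ∀ᵐ ab : ℝ × ℝ ∂θ, κY ab.2 {y | eY y = ab.2} = 1 := by
    have hSm : MeasurableSet {p : ℝ × Y | eY p.2 = p.1} :=
      measurableSet_eq_fun (heY.comp measurable_snd) measurable_fst
    have hmeas : Measurable fun a : ℝ => κY a {y | eY y = a} := by
      have := Kernel.measurable_kernel_prodMk_left (κ := κY) hSm
      convert this using 2 with a
      rfl
    have h := hκY2
    rw [← hθ.2] at h
    have : ∀ᵐ a ∂(θ.map Prod.snd), κY a {y | eY y = a} = 1 := h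
    exact (ae_map_iff measurable_snd.aemeasurable
      (p := fun a => κY a {y | eY y = a} = 1) (hmeas (measurableSet_singleton 1))).mp this
  ext s hs
  rw [Measure.map_apply hmapmeas hs, hμ,
    Measure.bind_apply (hmapmeas hs) hKm.aemeasurable]
  have hae : ∀ᵐ ab : ℝ × ℝ ∂θ, K ab (Prod.map eX eY ⁻¹' s) = Measure.dirac ab s := by
    filter_upwards [haeX, haeY] with ab hXfib hYfib
    have hdX : (κX ab.1).map eX = Measure.dirac ab.1 := by
      have hfun : eX =ᵐ[κX ab.1] fun _ => ab.1 := by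
        rw [Filter.EventuallyEq, ae_iff]
        have : {x | ¬ eX x = ab.1} = {x | eX x = ab.1}ᶜ := rfl
        rw [this, prob_compl_eq_zero_iff (measurableSet_eq_fun heX measurable_const)]
        exact hXfib
      rw [Measure.map_congr hfun, Measure.map_const, measure_univ, one_smul]
    have hdY : (κY ab.2).map eY = Measure.dirac ab.2 := by
      have hfun : eY =ᵐ[κY ab.2] fun _ => ab.2 := by
        rw [Filter.EventuallyEq, ae_iff]
        have : {y | ¬ eY y = ab.2} = {y | eY y = ab.2}ᶜ := rfl
        rw [this, prob_compl_eq_zero_iff (measurableSet_eq_fun heY measurable_const)]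
        exact hYfib
      rw [Measure.map_congr hfun, Measure.map_const, measure_univ, one_smul]
    calc K ab (Prod.map eX eY ⁻¹' s)
        = ((κX ab.1).prod (κY ab.2)).map (Prod.map eX eY) s := by
          rw [hKap ab, Measure.map_apply hmapmeas hs]
      _ = (((κX ab.1).map eX).prod ((κY ab.2).map eY)) s := by
          rw [Measure.map_prod_map _ _ heX heY]
      _ = Measure.dirac ab s := by
          rw [hdX, hdY, Measure.dirac_prod_dirac]
  rw [lintegral_congr_ae hae]
  simp_rw [Measure.dirac_apply' _ hs]
  rw [lintegral_indicator_one hs]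

/-- Pointwise: the joint eccentricity dominates the difference of eccentricities. -/
lemma ecc_pointwise {X Y : Type*} [MeasurableSpace X] [MeasurableSpace Y]
    (μX : Measure X) (μY : Measure Y) [IsProbabilityMeasure μX] [IsProbabilityMeasure μY]
    {ωX : X × X → ℝ} {ωY : Y × Y → ℝ} (hωX : Measurable ωX) (hωY : Measurable ωY)
    (hbX : ∃ M, ∀ q, |ωX q| ≤ M) (hbY : ∃ M, ∀ q, |ωY q| ≤ M)
    (p : ℝ≥0∞) (hp : 1 ≤ p) (s : X) (t : Y) :
    (‖eccOut p ωX μX s - eccOut p ωY μY t‖₊ : ℝ≥0∞) ≤ eccOutJoint p ωX ωY μX μY s t := by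
  refine le_iInf₂ fun ν hν => ?_
  haveI : IsProbabilityMeasure ν := isProbCoupling hν.1
  set d := eLpNorm (fun q : X × Y => ωX (s, q.1) - ωY (t, q.2)) p ν with hd
  by_cases hdtop : d = ∞
  · rw [hdtop]; exact le_top
  have hfs : Measurable fun x : X => ωX (s, x) := hωX.comp measurable_prodMk_left
  have hgt : Measurable fun y : Y => ωY (t, y) := hωY.comp measurable_prodMk_left
  have hfν : Measurable fun q : X × Y => ωX (s, q.1) := hfs.comp measurable_fst
  have hgν : Measurable fun q : X × Y => ωY (t, q.2) := hgt.comp measurable_snd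
  set A := eLpNorm (fun q : X × Y => ωX (s, q.1)) p ν with hA
  set B := eLpNorm (fun q : X × Y => ωY (t, q.2)) p ν with hB
  have hAeq : A = eLpNorm (fun x : X => ωX (s, x)) p μX := by
    rw [← hν.1, Measure.fst,
      eLpNorm_map_measure hfs.aestronglyMeasurable measurable_fst.aemeasurable]
    rfl
  have hBeq : B = eLpNorm (fun y : Y => ωY (t, y)) p μY := by
    rw [← hν.2, Measure.snd,
      eLpNorm_map_measure hgt.aestronglyMeasurable measurable_snd.aemeasurable]
    rfl
  obtain ⟨MX, hMX⟩ := hbX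
  obtain ⟨MY, hMY⟩ := hbY
  have hAfin : A ≠ ∞ := by
    refine ne_of_lt (lt_of_le_of_lt (eLpNorm_le_of_ae_bound (C := MX)
      (Filter.Eventually.of_forall fun q => by
        simpa [Real.norm_eq_abs] using hMX (s, q.1))) ?_)
    simp [measure_univ]
  have hBfin : B ≠ ∞ := by
    refine ne_of_lt (lt_of_le_of_lt (eLpNorm_le_of_ae_bound (C := MY)
      (Filter.Eventually.of_forall fun q => by
        simpa [Real.norm_eq_abs] using hMY (t, q.2))) ?_)
    simp [measure_univ]
  have hABd : A ≤ d + B := by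
    have heq : (fun q : X × Y => ωX (s, q.1))
        = (fun q : X × Y => (ωX (s, q.1) - ωY (t, q.2)) + ωY (t, q.2)) := by
      funext q; ring
    rw [hA, heq]
    exact eLpNorm_add_le (hfν.sub hgν).aestronglyMeasurable hgν.aestronglyMeasurable hp
  have hBAd : B ≤ d + A := by
    have heq : (fun q : X × Y => ωY (t, q.2))
        = (fun q : X × Y => (ωY (t, q.2) - ωX (s, q.1)) + ωX (s, q.1)) := by
      funext q; ring
    rw [hB, heq]
    have hneg : eLpNorm (fun q : X × Y => ωY (t, q.2) - ωX (s, q.1)) p ν = d := by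
      rw [hd]
      have hfe : (fun q : X × Y => ωY (t, q.2) - ωX (s, q.1))
          = -(fun q : X × Y => ωX (s, q.1) - ωY (t, q.2)) := by
        funext q
        simp only [Pi.neg_apply]
        ring
      rw [hfe, eLpNorm_neg]
    calc eLpNorm (fun q : X × Y => (ωY (t, q.2) - ωX (s, q.1)) + ωX (s, q.1)) p ν
        ≤ eLpNorm (fun q : X × Y => ωY (t, q.2) - ωX (s, q.1)) p ν
          + eLpNorm (fun q : X × Y => ωX (s, q.1)) p ν :=
          eLpNorm_add_le (hgν.sub hfν).aestronglyMeasurable hfν.aestronglyMeasurable hp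
      _ = d + A := by rw [hneg]
  have h1 : A.toReal ≤ d.toReal + B.toReal := by
    have := ENNReal.toReal_mono (ENNReal.add_ne_top.mpr ⟨hdtop, hBfin⟩) hABd
    rwa [ENNReal.toReal_add hdtop hBfin] at this
  have h2 : B.toReal ≤ d.toReal + A.toReal := by
    have := ENNReal.toReal_mono (ENNReal.add_ne_top.mpr ⟨hdtop, hAfin⟩) hBAd
    rwa [ENNReal.toReal_add hdtop hAfin] at this
  have habs : |eccOut p ωX μX s - eccOut p ωY μY t| ≤ d.toReal := by
    have hx : eccOut p ωX μX s = A.toReal := by rw [eccOut, hAeq]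
    have hy : eccOut p ωY μY t = B.toReal := by rw [eccOut, hBeq]
    rw [abs_sub_le_iff, hx, hy]
    constructor <;> linarith
  calc (‖eccOut p ωX μX s - eccOut p ωY μY t‖₊ : ℝ≥0∞)
      = ENNReal.ofReal |eccOut p ωX μX s - eccOut p ωY μY t| := Real.enorm_eq_ofReal_abs _
    _ ≤ ENNReal.ofReal d.toReal := ENNReal.ofReal_le_ofReal habs
    _ = d := ENNReal.ofReal_toReal hdtop

end AuxLemmas

/-- **The First Lower Bound and its real-line form**: the TLB dominates the FLB, i.e.
`inf_μ ‖ecc^out_{p,X,Y}‖_{L^p(μ)} ≥ inf_μ ‖ecc^out_{p,X} ∘ π_X − ecc^out_{p,Y} ∘ π_Y‖_{L^p(μ)}`,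
and the latter equals `W_p((ecc^out_{p,X})_*μ_X, (ecc^out_{p,Y})_*μ_Y)`. -/
theorem first_lower_bound
    {X Y : Type*} [TopologicalSpace X] [PolishSpace X] [MeasurableSpace X] [BorelSpace X]
    [TopologicalSpace Y] [PolishSpace Y] [MeasurableSpace Y] [BorelSpace Y]
    (μX : Measure X) (μY : Measure Y) [IsProbabilityMeasure μX] [IsProbabilityMeasure μY]
    (ωX : X × X → ℝ) (ωY : Y × Y → ℝ)
    (hωX : Measurable ωX) (hωY : Measurable ωY)
    (hbX : ∃ M, ∀ q, |ωX q| ≤ M) (hbY : ∃ M, ∀ q, |ωY q| ≤ M)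
    (p : ℝ≥0∞) (hp : 1 ≤ p) :
    (⨅ μ ∈ Coupling μX μY,
        eLpNorm (fun q : X × Y => eccOut p ωX μX q.1 - eccOut p ωY μY q.2) p μ)
      ≤ (⨅ μ ∈ Coupling μX μY,
          lpNormENN p (fun q : X × Y => eccOutJoint p ωX ωY μX μY q.1 q.2) μ) ∧
    (⨅ μ ∈ Coupling μX μY,
        eLpNorm (fun q : X × Y => eccOut p ωX μX q.1 - eccOut p ωY μY q.2) p μ)
      = Wp p (μX.map (eccOut p ωX μX)) (μY.map (eccOut p ωY μY)) := by
  have hp0 : p ≠ 0 := (lt_of_lt_of_le zero_lt_one hp).ne'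
  have heX : Measurable (eccOut p ωX μX) := measurable_eccOut p ωX hωX μX
  have heY : Measurable (eccOut p ωY μY) := measurable_eccOut p ωY hωY μY
  constructor
  · -- TLB dominates FLB
    refine le_iInf₂ fun μ hμ => le_trans (iInf₂_le μ hμ) ?_
    rw [eLpNorm_eq_lpNormENN hp0]
    exact lpNormENN_mono p μ fun q =>
      ecc_pointwise μX μY hωX hωY hbX hbY p hp q.1 q.2
  · apply le_antisymm
    · -- inf over couplings ≤ Wp : lift couplings of the pushforwards
      rw [Wp]
      refine le_iInf₂ fun θ hθ => ?_
      obtain ⟨μ, hμmem, hmap⟩ := coupling_lift μX μY heX heY hθ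
      refine le_trans (iInf₂_le μ hμmem) ?_
      have hcost : eLpNorm (fun r : ℝ × ℝ => r.1 - r.2) p θ
          = eLpNorm (fun q : X × Y => eccOut p ωX μX q.1 - eccOut p ωY μY q.2) p μ := by
        rw [← hmap, eLpNorm_map_measure (g := fun r : ℝ × ℝ => r.1 - r.2)
          (measurable_fst.sub measurable_snd).aestronglyMeasurable
          (heX.prodMap heY).aemeasurable]
        rfl
      exact hcost.ge
    · -- Wp ≤ inf over couplings : push couplings forward
      rw [Wp]
      refine le_iInf₂ fun μ hμ => ?_
      set θ := μ.map (Prod.map (eccOut p ωX μX) (eccOut p ωY μY)) with hθdef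
      have hmem : θ ∈ Coupling (μX.map (eccOut p ωX μX)) (μY.map (eccOut p ωY μY)) := by
        constructor
        · show θ.fst = _
          rw [hθdef, Measure.fst, Measure.map_map measurable_fst (heX.prodMap heY)]
          have h1 : (Prod.fst ∘ Prod.map (eccOut p ωX μX) (eccOut p ωY μY))
              = (eccOut p ωX μX) ∘ Prod.fst := rfl
          rw [h1, ← Measure.map_map heX measurable_fst]
          have h2 : μ.map Prod.fst = μ.fst := rfl
          rw [h2, hμ.1]
        · show θ.snd = _
          rw [hθdef, Measure.snd, Measure.map_map measurable_snd (heX.prodMap heY)]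
          have h1 : (Prod.snd ∘ Prod.map (eccOut p ωX μX) (eccOut p ωY μY))
              = (eccOut p ωY μY) ∘ Prod.snd := rfl
          rw [h1, ← Measure.map_map heY measurable_snd]
          have h2 : μ.map Prod.snd = μ.snd := rfl
          rw [h2, hμ.2]
      refine le_trans (iInf₂_le θ hmem) ?_
      rw [hθdef, eLpNorm_map_measure (g := fun r : ℝ × ℝ => r.1 - r.2)
        (measurable_fst.sub measurable_snd).aestronglyMeasurable
        (heX.prodMap heY).aemeasurable]
      exact le_of_eq rfl
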